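/- arXiv:1605.08880 — 4 statements merged into one kernel-verified Lean document; each statement's English description precedes it below -/
import Mathlib

section
/- The Wachter density f_W(λ; γ1, γ2) = (1/(2π γ1)) √((b₊ - λ)(λ - b₋)) / (λ(1-λ)) on [b₋, b₊], with b± = (√(γ1(1-γ2)) ± √(γ2(1-γ1)))², together with atoms of size max{0, 1 - γ2/γ1} at 0 and max{0, 1 - (1-γ2)/γ1} at 1, defines a probability measure; in particular the total mass equals 1. -/
open Real MeasureTheory Set


lemma wachter_key (a b : ℝ) (ha : 0 ≤ a) (hab : a < b) :
    IntervalIntegrable (fun x => Real.sqrt ((b - x) * (x - a)) / x) volume a b ∧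
    ∫ x in a..b, Real.sqrt ((b - x) * (x - a)) / x
      = Real.pi * ((a + b) / 2 - Real.sqrt (a * b)) := by
  have hb0 : 0 < b := lt_of_le_of_lt ha hab
  set m : ℝ := (a + b) / 2 with hm
  set r : ℝ := (b - a) / 2 with hr
  have hr0 : 0 < r := by rw [hr]; linarith
  set c : ℝ := Real.sqrt (a * b) with hc
  set F : ℝ → ℝ := fun x => Real.sqrt ((b - x) * (x - a))
      + m * Real.arcsin ((x - m) / r)
      - c * Real.arcsin ((m * x - a * b) / (r * x)) with hF
  -- continuity of F on Icc a b
  have hcont : ContinuousOn F (Icc a b) := by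
    apply ContinuousOn.sub
    apply ContinuousOn.add
    · exact (Real.continuous_sqrt.comp (by continuity)).continuousOn
    · exact (continuous_const.mul (Real.continuous_arcsin.comp (by continuity))).continuousOn
    · rcases ha.eq_or_lt with h0 | h0
      · have : ∀ x ∈ Icc a b, (0:ℝ) = c * Real.arcsin ((m * x - a * b) / (r * x)) := by
          intro x hx; simp [hc, ← h0]
        exact (continuousOn_const.congr fun x hx => (this x hx).symm)
      · apply ContinuousOn.mul continuousOn_const
        apply Real.continuous_arcsin.comp_continuousOn
        apply ContinuousOn.div (by fun_prop) (by fun_prop)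
        intro x hx
        have : 0 < x := lt_of_lt_of_le h0 hx.1
        positivity
  -- derivative of F on Ioo a b
  have hderiv : ∀ x ∈ Ioo a b, HasDerivAt F (Real.sqrt ((b - x) * (x - a)) / x) x := by
    intro x hx
    have hxa : a < x := hx.1
    have hxb : x < b := hx.2
    have hx0 : 0 < x := lt_of_le_of_lt ha hxa
    have hp : 0 < (b - x) * (x - a) := by nlinarith
    set s : ℝ := Real.sqrt ((b - x) * (x - a)) with hs
    have hs0 : 0 < s := Real.sqrt_pos.2 hp
    have hss : s ^ 2 = (b - x) * (x - a) := Real.sq_sqrt hp.le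
    -- first term
    have h1 : HasDerivAt (fun y => Real.sqrt ((b - y) * (y - a))) ((m - x) / s) x := by
      have hinner : HasDerivAt (fun y => (b - y) * (y - a)) (a + b - 2 * x) x := by
        have h := (((hasDerivAt_id x).const_sub b).mul ((hasDerivAt_id x).sub_const a))
        simp only [id_eq] at h
        refine h.congr_deriv ?_; ring
      have h := hinner.sqrt hp.ne'
      convert h using 1
      rw [← hs, hm]
      field_simp
    -- second term
    have hpoly : (b - x) * (x - a) = r ^ 2 - (x - m) ^ 2 := by rw [hm, hr]; ring
    have h2 : HasDerivAt (fun y => m * Real.arcsin ((y - m) / r)) (m / s) x := by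
      have hg : HasDerivAt (fun y : ℝ => (y - m) / r) (1 / r) x := by
        simpa using ((hasDerivAt_id x).sub_const m).div_const r
      have harg : ((x - m) / r) ^ 2 < 1 := by
        rw [div_pow, div_lt_one (by positivity)]
        nlinarith
      have hne1 : (x - m) / r ≠ 1 := fun h => by simp [h] at harg
      have hnem1 : (x - m) / r ≠ -1 := fun h => by simp [h] at harg
      have h := ((Real.hasDerivAt_arcsin hnem1 hne1).comp x hg).const_mul m
      have heq : Real.sqrt (1 - ((x - m) / r) ^ 2) = s / r := by
        rw [show (1:ℝ) - ((x - m) / r) ^ 2 = ((b - x) * (x - a)) / r ^ 2 by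
          rw [div_pow, hpoly]; field_simp]
        rw [Real.sqrt_div hp.le, Real.sqrt_sq hr0.le, hs]
      refine h.congr_deriv ?_; symm
      rw [heq]
      field_simp
    -- third term
    have h3 : HasDerivAt (fun y => c * Real.arcsin ((m * y - a * b) / (r * y)))
        (a * b / (x * s)) x := by
      rcases ha.eq_or_lt with h0 | h0
      · have hc0 : c = 0 := by rw [hc, ← h0]; simp
        have hfun : (fun y => c * Real.arcsin ((m * y - a * b) / (r * y)))
            = fun _ => (0:ℝ) := by funext y; rw [hc0]; ring
        rw [hfun, show a * b / (x * s) = 0 by rw [← h0]; simp]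
        exact hasDerivAt_const x 0
      · have hab0 : 0 < a * b := mul_pos h0 hb0
        have hc0 : 0 < c := Real.sqrt_pos.2 hab0
        have hcc : c ^ 2 = a * b := Real.sq_sqrt hab0.le
        have hg : HasDerivAt (fun y : ℝ => (m * y - a * b) / (r * y)) (a * b / (r * x ^ 2)) x := by
          have h := (((hasDerivAt_id x).const_mul m).sub_const (a * b)).div
            ((hasDerivAt_id x).const_mul r) (by positivity)
          refine h.congr_deriv ?_; symm
          simp only [id_eq]
          field_simp
          ring
        have hiden : (r * x) ^ 2 - (m * x - a * b) ^ 2 = a * b * ((b - x) * (x - a)) := by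
          rw [hm, hr]; ring
        have harg : ((m * x - a * b) / (r * x)) ^ 2 < 1 := by
          rw [div_pow, div_lt_one (by positivity)]
          nlinarith [mul_pos hab0 hp]
        have hne1 : (m * x - a * b) / (r * x) ≠ 1 := fun h => by simp [h] at harg
        have hnem1 : (m * x - a * b) / (r * x) ≠ -1 := fun h => by simp [h] at harg
        have h := ((Real.hasDerivAt_arcsin hnem1 hne1).comp x hg).const_mul c
        have heq : Real.sqrt (1 - ((m * x - a * b) / (r * x)) ^ 2) = c * s / (r * x) := by
          rw [show (1:ℝ) - ((m * x - a * b) / (r * x)) ^ 2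
              = (a * b * ((b - x) * (x - a))) / (r * x) ^ 2 by
            rw [div_pow, ← hiden]; field_simp]
          rw [Real.sqrt_div (by positivity), Real.sqrt_sq (by positivity),
            Real.sqrt_mul hab0.le, hs, hc]
        refine h.congr_deriv ?_; symm
        rw [heq]
        rw [div_div_eq_mul_div, div_mul_eq_mul_div, mul_comm]
        field_simp
    have hsum := (h1.add h2).sub h3
    refine hsum.congr_deriv ?_; symm
    rw [hm]
    field_simp
    linear_combination 2 * hss
  -- nonnegativity
  have hnn : ∀ x ∈ Ioo a b, 0 ≤ Real.sqrt ((b - x) * (x - a)) / x := by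
    intro x hx
    exact div_nonneg (Real.sqrt_nonneg _) (le_of_lt (lt_of_le_of_lt ha hx.1))
  have hInt : IntervalIntegrable (fun x => Real.sqrt ((b - x) * (x - a)) / x) volume a b := by
    rw [intervalIntegrable_iff, uIoc_of_le hab.le]
    exact intervalIntegral.integrableOn_deriv_of_nonneg hcont hderiv hnn
  refine ⟨hInt, ?_⟩
  rw [intervalIntegral.integral_eq_sub_of_hasDerivAt_of_le hab.le hcont hderiv hInt]
  have hFb : F b = m * (Real.pi / 2) - c * (Real.pi / 2) := by
    rw [hF]
    simp only
    rw [show (b - b) * (b - a) = 0 by ring, Real.sqrt_zero,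
      show (b - m) / r = 1 by
        rw [hm, hr, div_eq_one_iff_eq (by linarith : ((b - a) / 2 : ℝ) ≠ 0)]; ring,
      show (m * b - a * b) / (r * b) = 1 by
        rw [hm, hr, div_eq_one_iff_eq (by positivity : ((b - a) / 2 * b : ℝ) ≠ 0)]; ring,
      Real.arcsin_one]
    ring
  have hFa : F a = -(m * (Real.pi / 2)) + c * (Real.pi / 2) := by
    rw [hF]
    simp only
    rw [show (b - a) * (a - a) = 0 by ring, Real.sqrt_zero,
      show (a - m) / r = -1 by
        rw [hm, hr, div_eq_iff (by linarith : ((b - a) / 2 : ℝ) ≠ 0)]; ring]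
    rcases ha.eq_or_lt with h0 | h0
    · have hc0 : c = 0 := by rw [hc, ← h0]; simp
      rw [hc0]
      simp [Real.arcsin_neg_one]
    · rw [show (m * a - a * b) / (r * a) = -1 by
        rw [hm, hr]; rw [div_eq_iff (by positivity)]; ring]
      rw [Real.arcsin_neg_one]
      ring
  rw [hFb, hFa, hm, hc]
  ring

lemma wachter_key2 (a b : ℝ) (hab : a < b) (hb : b ≤ 1) :
    IntervalIntegrable (fun x => Real.sqrt ((b - x) * (x - a)) / (1 - x)) volume a b ∧
    ∫ x in a..b, Real.sqrt ((b - x) * (x - a)) / (1 - x)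
      = Real.pi * ((2 - a - b) / 2 - Real.sqrt ((1 - a) * (1 - b))) := by
  obtain ⟨hI, hV⟩ := wachter_key (1 - b) (1 - a) (by linarith) (by linarith)
  have hfun : (fun x => Real.sqrt ((b - x) * (x - a)) / (1 - x))
      = fun x => Real.sqrt ((1 - a - (1 - x)) * (1 - x - (1 - b))) / (1 - x) := by
    funext x
    rw [show (1:ℝ) - a - (1 - x) = x - a by ring, show (1:ℝ) - x - (1 - b) = b - x by ring,
      mul_comm]
  constructor
  · rw [hfun]
    have h2 := (hI.comp_sub_left 1).symm
    rw [show (1:ℝ) - (1 - a) = a by ring, show (1:ℝ) - (1 - b) = b by ring] at h2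
    exact h2
  · rw [hfun]
    rw [show (fun x => Real.sqrt ((1 - a - (1 - x)) * (1 - x - (1 - b))) / (1 - x))
        = fun x => (fun u => Real.sqrt ((1 - a - u) * (u - (1 - b))) / u) (1 - x) from rfl]
    rw [intervalIntegral.integral_comp_sub_left
      (fun u => Real.sqrt ((1 - a - u) * (u - (1 - b))) / u) 1]
    rw [hV, show (1 - b) * (1 - a) = (1 - a) * (1 - b) from mul_comm _ _]
    ring

set_option maxHeartbeats 1000000

/-- The Wachter density on `[b₋, b₊]` together with the atoms at `0`
and `1` defines a probability measure: the total mass equals one. -/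
theorem stmt6 (γ₁ γ₂ : ℝ) (hγ₁ : γ₁ ∈ Set.Ioo (0 : ℝ) 1) (hγ₂ : γ₂ ∈ Set.Ioo (0 : ℝ) 1)
    (bm bp : ℝ)
    (hbm : bm = (Real.sqrt (γ₁ * (1 - γ₂)) - Real.sqrt (γ₂ * (1 - γ₁))) ^ 2)
    (hbp : bp = (Real.sqrt (γ₁ * (1 - γ₂)) + Real.sqrt (γ₂ * (1 - γ₁))) ^ 2)
    (fW : ℝ → ℝ)
    (hfW : ∀ l, fW l =
      (1 / (2 * Real.pi * γ₁)) * Real.sqrt ((bp - l) * (l - bm)) / (l * (1 - l)))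
    (μ : Measure ℝ)
    (hμ : μ = (volume.withDensity fun l =>
          ENNReal.ofReal (Set.indicator (Set.Icc bm bp) fW l))
        + ENNReal.ofReal (max 0 (1 - γ₂ / γ₁)) • Measure.dirac (0 : ℝ)
        + ENNReal.ofReal (max 0 (1 - (1 - γ₂) / γ₁)) • Measure.dirac (1 : ℝ)) :
    IsProbabilityMeasure μ := by
  obtain ⟨hγ₁0, hγ₁1⟩ := hγ₁
  obtain ⟨hγ₂0, hγ₂1⟩ := hγ₂
  have hA : (0:ℝ) < γ₁ * (1 - γ₂) := by nlinarith
  have hB : (0:ℝ) < γ₂ * (1 - γ₁) := by nlinarith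
  have hX : (0:ℝ) ≤ (1 - γ₁) * (1 - γ₂) := by nlinarith
  have hY : (0:ℝ) ≤ γ₁ * γ₂ := by positivity
  set u : ℝ := Real.sqrt (γ₁ * (1 - γ₂)) with hu'
  set v : ℝ := Real.sqrt (γ₂ * (1 - γ₁)) with hv'
  have hu : u ^ 2 = γ₁ * (1 - γ₂) := Real.sq_sqrt hA.le
  have hv : v ^ 2 = γ₂ * (1 - γ₁) := Real.sq_sqrt hB.le
  have hu0 : 0 < u := Real.sqrt_pos.2 hA
  have hv0 : 0 < v := Real.sqrt_pos.2 hB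
  have hbm0 : 0 ≤ bm := by rw [hbm]; positivity
  have hmlt : bm < bp := by rw [hbm, hbp]; nlinarith
  have hbp1 : bp ≤ 1 := by
    have h1 : u * v = Real.sqrt ((γ₁ * (1 - γ₂)) * (γ₂ * (1 - γ₁))) :=
      (Real.sqrt_mul hA.le _).symm
    have h1' : (γ₁ * (1 - γ₂)) * (γ₂ * (1 - γ₁)) = ((1 - γ₁) * (1 - γ₂)) * (γ₁ * γ₂) := by ring
    have h2 : Real.sqrt (((1 - γ₁) * (1 - γ₂)) * (γ₁ * γ₂))
        = Real.sqrt ((1 - γ₁) * (1 - γ₂)) * Real.sqrt (γ₁ * γ₂) := Real.sqrt_mul hX _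
    rw [h1'] at h1
    rw [hbp]
    nlinarith [Real.sq_sqrt hX, Real.sq_sqrt hY,
      sq_nonneg (Real.sqrt ((1 - γ₁) * (1 - γ₂)) - Real.sqrt (γ₁ * γ₂)), hu, hv]
  have hsbm : Real.sqrt (bm * bp) = |γ₁ - γ₂| := by
    have h : bm * bp = (γ₁ - γ₂) ^ 2 := by
      rw [hbm, hbp]
      linear_combination (u ^ 2 - v ^ 2 + γ₁ - γ₂) * hu - (u ^ 2 - v ^ 2 + γ₁ - γ₂) * hv
    rw [h, Real.sqrt_sq_eq_abs]
  have hs1m : Real.sqrt ((1 - bm) * (1 - bp)) = |1 - γ₁ - γ₂| := by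
    have h : (1 - bm) * (1 - bp) = (1 - γ₁ - γ₂) ^ 2 := by
      rw [hbm, hbp]
      linear_combination (u ^ 2 - v ^ 2 + (γ₁ - γ₂) - 2) * hu
        + (-(u ^ 2 - v ^ 2) - (γ₁ - γ₂) - 2) * hv
    rw [h, Real.sqrt_sq_eq_abs]
  obtain ⟨hi1, hv1⟩ := wachter_key bm bp hbm0 hmlt
  obtain ⟨hi2, hv2⟩ := wachter_key2 bm bp hmlt hbp1
  set C : ℝ := 1 / (2 * Real.pi * γ₁) with hC
  have hC0 : 0 ≤ C := by rw [hC]; positivity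
  set g1 : ℝ → ℝ := fun x => Real.sqrt ((bp - x) * (x - bm)) / x with hg1
  set g2 : ℝ → ℝ := fun x => Real.sqrt ((bp - x) * (x - bm)) / (1 - x) with hg2
  -- pointwise identity on Icc
  have hEq : ∀ x ∈ Icc bm bp, fW x = C * g1 x + C * g2 x := by
    intro x hx
    rw [hfW, hg1, hg2]
    simp only
    by_cases hx0 : x = 0
    · have hbm' : bm = 0 := le_antisymm (hx0 ▸ hx.1) hbm0
      subst hx0
      rw [hbm']
      simp
    · by_cases hx1 : x = 1
      · have hbp' : bp = 1 := le_antisymm hbp1 (hx1 ▸ hx.2)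
        subst hx1
        rw [hbp']
        simp
      · have hxpos : 0 < x := lt_of_le_of_ne (le_trans hbm0 hx.1) (Ne.symm hx0)
        have hx1' : x < 1 := lt_of_le_of_ne (le_trans hx.2 hbp1) hx1
        have h1x : (0:ℝ) < 1 - x := by linarith
        field_simp
        ring
  have hIntSum : IntegrableOn (fun x => C * g1 x + C * g2 x) (Icc bm bp) volume := by
    rw [integrableOn_Icc_iff_integrableOn_Ioc]
    exact ((intervalIntegrable_iff_integrableOn_Ioc_of_le hmlt.le).mp
      ((hi1.const_mul C).add (hi2.const_mul C)))
  have hInt : IntegrableOn fW (Icc bm bp) volume :=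
    hIntSum.congr_fun (fun x hx => (hEq x hx).symm) measurableSet_Icc
  have hnn : 0 ≤ᵐ[volume.restrict (Icc bm bp)] fW := by
    refine (ae_restrict_iff' measurableSet_Icc).2 (ae_of_all _ fun x hx => ?_)
    rw [hfW]
    apply div_nonneg
    · exact mul_nonneg hC0 (Real.sqrt_nonneg _)
    · exact mul_nonneg (le_trans hbm0 hx.1) (by linarith [le_trans hx.2 hbp1])
  have hval : ∫ x in Icc bm bp, fW x
      = C * (Real.pi * ((bm + bp) / 2 - |γ₁ - γ₂|))
        + C * (Real.pi * ((2 - bm - bp) / 2 - |1 - γ₁ - γ₂|)) := by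
    rw [MeasureTheory.integral_Icc_eq_integral_Ioc, ← intervalIntegral.integral_of_le hmlt.le]
    rw [intervalIntegral.integral_congr (g := fun x => C * g1 x + C * g2 x)
      (by rw [Set.uIcc_of_le hmlt.le]; exact hEq)]
    rw [intervalIntegral.integral_add (hi1.const_mul C) (hi2.const_mul C),
      intervalIntegral.integral_const_mul, intervalIntegral.integral_const_mul,
      hg1, hg2]
    simp only
    rw [hv1, hv2, hsbm, hs1m]
  -- total mass
  constructor
  rw [hμ]
  rw [Measure.add_apply, Measure.add_apply, Measure.smul_apply, Measure.smul_apply,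
    Measure.dirac_apply_of_mem (Set.mem_univ (0:ℝ)),
    Measure.dirac_apply_of_mem (Set.mem_univ (1:ℝ)), smul_eq_mul, smul_eq_mul,
    mul_one, mul_one]
  rw [MeasureTheory.withDensity_apply _ MeasurableSet.univ, Measure.restrict_univ]
  have hindic : ∫⁻ x, ENNReal.ofReal ((Icc bm bp).indicator fW x)
      = ∫⁻ x in Icc bm bp, ENNReal.ofReal (fW x) := by
    rw [← lintegral_indicator measurableSet_Icc]
    refine lintegral_congr fun x => ?_
    by_cases h : x ∈ Icc bm bp <;> simp [h]
  rw [hindic, ← ofReal_integral_eq_lintegral_ofReal hInt hnn, hval]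
  -- now pure real/ennreal arithmetic
  have hπ : (0:ℝ) < Real.pi := Real.pi_pos
  have habs : |γ₁ - γ₂| + |1 - γ₁ - γ₂| ≤ 1 := by
    rcases abs_cases (γ₁ - γ₂) with ⟨e1, _⟩ | ⟨e1, _⟩ <;>
      rcases abs_cases (1 - γ₁ - γ₂) with ⟨e2, _⟩ | ⟨e2, _⟩ <;> rw [e1, e2] <;> linarith
  have hT : C * (Real.pi * ((bm + bp) / 2 - |γ₁ - γ₂|))
        + C * (Real.pi * ((2 - bm - bp) / 2 - |1 - γ₁ - γ₂|))
      = (1 - |γ₁ - γ₂| - |1 - γ₁ - γ₂|) / (2 * γ₁) := by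
    rw [hC]
    field_simp
    ring
  rw [hT]
  have hT0 : 0 ≤ (1 - |γ₁ - γ₂| - |1 - γ₁ - γ₂|) / (2 * γ₁) := by
    apply div_nonneg (by linarith) (by linarith)
  rw [← ENNReal.ofReal_add hT0 (le_max_left _ _), ← ENNReal.ofReal_add
    (add_nonneg hT0 (le_max_left _ _)) (le_max_left _ _)]
  rw [show (1 - |γ₁ - γ₂| - |1 - γ₁ - γ₂|) / (2 * γ₁) + max 0 (1 - γ₂ / γ₁)
      + max 0 (1 - (1 - γ₂) / γ₁) = 1 from ?_, ENNReal.ofReal_one]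
  have e1 : 1 - γ₂ / γ₁ = (γ₁ - γ₂) / γ₁ := by field_simp
  have e2 : 1 - (1 - γ₂) / γ₁ = (γ₁ + γ₂ - 1) / γ₁ := by field_simp; ring
  rw [e1, e2]
  rcases le_total γ₂ γ₁ with h1 | h1 <;> rcases le_total (γ₁ + γ₂) 1 with h2 | h2
  · have m1 : max 0 ((γ₁ - γ₂) / γ₁) = (γ₁ - γ₂) / γ₁ :=
      max_eq_right (div_nonneg (by linarith) hγ₁0.le)
    have m2 : max 0 ((γ₁ + γ₂ - 1) / γ₁) = 0 :=
      max_eq_left (div_nonpos_of_nonpos_of_nonneg (by linarith) hγ₁0.le)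
    rw [m1, m2, abs_of_nonneg (by linarith : (0:ℝ) ≤ γ₁ - γ₂),
      abs_of_nonneg (by linarith : (0:ℝ) ≤ 1 - γ₁ - γ₂)]
    field_simp
    ring
  · have m1 : max 0 ((γ₁ - γ₂) / γ₁) = (γ₁ - γ₂) / γ₁ :=
      max_eq_right (div_nonneg (by linarith) hγ₁0.le)
    have m2 : max 0 ((γ₁ + γ₂ - 1) / γ₁) = (γ₁ + γ₂ - 1) / γ₁ :=
      max_eq_right (div_nonneg (by linarith) hγ₁0.le)
    rw [m1, m2, abs_of_nonneg (by linarith : (0:ℝ) ≤ γ₁ - γ₂),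
      abs_of_nonpos (by linarith : (1:ℝ) - γ₁ - γ₂ ≤ 0)]
    field_simp
    ring
  · have m1 : max 0 ((γ₁ - γ₂) / γ₁) = 0 :=
      max_eq_left (div_nonpos_of_nonpos_of_nonneg (by linarith) hγ₁0.le)
    have m2 : max 0 ((γ₁ + γ₂ - 1) / γ₁) = 0 :=
      max_eq_left (div_nonpos_of_nonpos_of_nonneg (by linarith) hγ₁0.le)
    rw [m1, m2, abs_of_nonpos (by linarith : γ₁ - γ₂ ≤ 0),
      abs_of_nonneg (by linarith : (0:ℝ) ≤ 1 - γ₁ - γ₂)]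
    field_simp
    ring
  · have m1 : max 0 ((γ₁ - γ₂) / γ₁) = 0 :=
      max_eq_left (div_nonpos_of_nonpos_of_nonneg (by linarith) hγ₁0.le)
    have m2 : max 0 ((γ₁ + γ₂ - 1) / γ₁) = (γ₁ + γ₂ - 1) / γ₁ :=
      max_eq_right (div_nonneg (by linarith) hγ₁0.le)
    rw [m1, m2, abs_of_nonpos (by linarith : γ₁ - γ₂ ≤ 0),
      abs_of_nonpos (by linarith : (1:ℝ) - γ₁ - γ₂ ≤ 0)]
    field_simp
    ring
end

section
/- For c ∈ (0, 1/2), with parameters γ1 = c/(1+c), γ2 = 2c/(1+c), the mean of the Wachter distribution W(λ; γ1, γ2) equals 2c/(1+c); i.e., ∫ λ dW(λ; c/(1+c), 2c/(1+c)) = 2c/(1+c). -/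
open Real
set_option maxHeartbeats 1000000 in

lemma key_integral (a b : ℝ) (hab : a < b) (hb1 : b < 1) :
    ∫ x in a..b, Real.sqrt ((b - x) * (x - a)) / (1 - x)
      = Real.pi * (1 - (a + b) / 2 - Real.sqrt ((1 - a) * (1 - b))) := by
  have ha1 : a < 1 := hab.trans hb1
  have hba : (0:ℝ) < b - a := by linarith
  have hqprod : (0:ℝ) < (1 - a) * (1 - b) := by nlinarith
  set q : ℝ := Real.sqrt ((1 - a) * (1 - b)) with hqdef
  have hq2 : q ^ 2 = (1 - a) * (1 - b) := Real.sq_sqrt hqprod.le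
  have hqpos : 0 < q := Real.sqrt_pos.mpr hqprod
  have key : ∀ x ∈ Set.Ioo a b,
      HasDerivAt (fun x =>
        -Real.sqrt ((b - x) * (x - a))
          + (1 - (a + b) / 2) * Real.arcsin ((2 * x - a - b) / (b - a))
          - q * Real.arcsin (((1 - b) * (x - a) - (1 - a) * (b - x)) / ((b - a) * (1 - x))))
        (Real.sqrt ((b - x) * (x - a)) / (1 - x)) x := by
    intro x hx
    obtain ⟨hax, hxb⟩ := hx
    have hx1 : x < 1 := hxb.trans hb1
    have h1x : (0:ℝ) < 1 - x := by linarith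
    have hRprod : (0:ℝ) < (b - x) * (x - a) := by nlinarith
    set R : ℝ := Real.sqrt ((b - x) * (x - a)) with hRdef
    have hR2 : R ^ 2 = (b - x) * (x - a) := Real.sq_sqrt hRprod.le
    have hRpos : 0 < R := Real.sqrt_pos.mpr hRprod
    -- piece 1 : sqrt
    have hp : HasDerivAt (fun y => (b - y) * (y - a)) (a + b - 2 * x) x := by
      have := ((hasDerivAt_id x).const_sub b).mul ((hasDerivAt_id x).sub_const a)
      exact this.congr_deriv (by simp only [id_eq]; ring)
    have h1 : HasDerivAt (fun y => Real.sqrt ((b - y) * (y - a)))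
        ((a + b - 2 * x) / (2 * R)) x := hp.sqrt hRprod.ne'
    -- piece 2 : first arcsin
    have ht : HasDerivAt (fun y => (2 * y - a - b) / (b - a)) (2 / (b - a)) x := by
      have := (((hasDerivAt_id x).const_mul 2).sub_const (a + b)).div_const (b - a)
      convert this using 1
      · rfl
      · rfl
      · funext y; simp only [id_eq]; ring
      · ring
    have htne1 : (2 * x - a - b) / (b - a) ≠ 1 := by
      intro h; rw [div_eq_iff hba.ne'] at h; nlinarith
    have htnem1 : (2 * x - a - b) / (b - a) ≠ -1 := by
      intro h; rw [div_eq_iff hba.ne'] at h; nlinarith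
    have h2 : HasDerivAt (fun y => Real.arcsin ((2 * y - a - b) / (b - a)))
        (1 / Real.sqrt (1 - ((2 * x - a - b) / (b - a)) ^ 2) * (2 / (b - a))) x :=
      by have := (Real.hasDerivAt_arcsin htnem1 htne1).comp x ht; exact this
    have hsq1 : Real.sqrt (1 - ((2 * x - a - b) / (b - a)) ^ 2) = 2 * R / (b - a) := by
      rw [show 1 - ((2 * x - a - b) / (b - a)) ^ 2 = (2 * R / (b - a)) ^ 2 by
        field_simp; nlinarith [hR2]]
      exact Real.sqrt_sq (by positivity)
    -- piece 3 : second arcsin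
    have hdenne : (b - a) * (1 - x) ≠ 0 := by positivity
    have hn : HasDerivAt (fun y => (1 - b) * (y - a) - (1 - a) * (b - y)) (2 - a - b) x := by
      have := (((hasDerivAt_id x).sub_const a).const_mul (1 - b)).sub
        (((hasDerivAt_id x).const_sub b).const_mul (1 - a))
      exact this.congr_deriv (by ring)
    have hd : HasDerivAt (fun y => (b - a) * (1 - y)) (-(b - a)) x := by
      have := ((hasDerivAt_id x).const_sub 1).const_mul (b - a)
      exact this.congr_deriv (by ring)
    have hg : HasDerivAt
        (fun y => ((1 - b) * (y - a) - (1 - a) * (b - y)) / ((b - a) * (1 - y)))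
        (((2 - a - b) * ((b - a) * (1 - x))
           - ((1 - b) * (x - a) - (1 - a) * (b - x)) * -(b - a)) / ((b - a) * (1 - x)) ^ 2) x :=
      hn.div hd hdenne
    have hdiff : ((b - a) * (1 - x)) ^ 2 - ((1 - b) * (x - a) - (1 - a) * (b - x)) ^ 2
        = 4 * (1 - a) * (1 - b) * (x - a) * (b - x) := by ring
    have hgabs : ((1 - b) * (x - a) - (1 - a) * (b - x)) ^ 2 < ((b - a) * (1 - x)) ^ 2 := by
      nlinarith
    have hdenpos : 0 < (b - a) * (1 - x) := by positivity
    have hgne1 : ((1 - b) * (x - a) - (1 - a) * (b - x)) / ((b - a) * (1 - x)) ≠ 1 := by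
      intro h; rw [div_eq_iff hdenne] at h; nlinarith
    have hgnem1 : ((1 - b) * (x - a) - (1 - a) * (b - x)) / ((b - a) * (1 - x)) ≠ -1 := by
      intro h; rw [div_eq_iff hdenne] at h; nlinarith
    have h3 : HasDerivAt
        (fun y => Real.arcsin (((1 - b) * (y - a) - (1 - a) * (b - y)) / ((b - a) * (1 - y))))
        (1 / Real.sqrt (1 - (((1 - b) * (x - a) - (1 - a) * (b - x)) / ((b - a) * (1 - x))) ^ 2)
          * (((2 - a - b) * ((b - a) * (1 - x))
              - ((1 - b) * (x - a) - (1 - a) * (b - x)) * -(b - a)) / ((b - a) * (1 - x)) ^ 2)) x :=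
      by have := (Real.hasDerivAt_arcsin hgnem1 hgne1).comp x hg; exact this
    have hsq2 : Real.sqrt (1 - (((1 - b) * (x - a) - (1 - a) * (b - x)) / ((b - a) * (1 - x))) ^ 2)
        = 2 * q * R / ((b - a) * (1 - x)) := by
      rw [show 1 - (((1 - b) * (x - a) - (1 - a) * (b - x)) / ((b - a) * (1 - x))) ^ 2
          = (2 * q * R / ((b - a) * (1 - x))) ^ 2 by
        have hqr : (2 * q * R) ^ 2 = 4 * ((1 - a) * (1 - b)) * ((b - x) * (x - a)) := by
          rw [mul_pow, mul_pow, hq2, hR2]; ring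
        field_simp
        nlinarith [hqr]]
      exact Real.sqrt_sq (by positivity)
    -- combine
    have hFd := ((h1.neg.add (h2.const_mul (1 - (a + b) / 2))).sub (h3.const_mul q))
    rw [hsq1, hsq2] at hFd
    have key2 : (1 - (a + b) / 2) * (1 / (2 * R / (b - a)) * (2 / (b - a)))
        = (2 - a - b) / (2 * R) := by
      field_simp; ring
    have hN : (2 - a - b) * ((b - a) * (1 - x))
        - ((1 - b) * (x - a) - (1 - a) * (b - x)) * -(b - a)
        = (b - a) * (2 * ((1 - a) * (1 - b))) := by ring
    have key3 : q * (1 / (2 * q * R / ((b - a) * (1 - x))) *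
        (((2 - a - b) * ((b - a) * (1 - x))
          - ((1 - b) * (x - a) - (1 - a) * (b - x)) * -(b - a)) / ((b - a) * (1 - x)) ^ 2))
        = (1 - a) * (1 - b) / (R * (1 - x)) := by
      rw [hN]
      field_simp
    rw [key2, key3] at hFd
    convert hFd using 1
    rfl
    rfl
    rfl
    rw [div_eq_iff h1x.ne']
    field_simp
    linear_combination 2 * hR2
  have hcont : ContinuousOn (fun x =>
      -Real.sqrt ((b - x) * (x - a))
        + (1 - (a + b) / 2) * Real.arcsin ((2 * x - a - b) / (b - a))
        - q * Real.arcsin (((1 - b) * (x - a) - (1 - a) * (b - x)) / ((b - a) * (1 - x))))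
      (Set.Icc a b) := by
    have h1 : Continuous fun x : ℝ => -Real.sqrt ((b - x) * (x - a)) := by fun_prop
    have h2 : Continuous fun x : ℝ =>
        (1 - (a + b) / 2) * Real.arcsin ((2 * x - a - b) / (b - a)) := by
      have : Continuous fun x : ℝ => (2 * x - a - b) / (b - a) := by fun_prop
      exact continuous_const.mul (Real.continuous_arcsin.comp this)
    have h3 : ContinuousOn (fun x : ℝ =>
        q * Real.arcsin (((1 - b) * (x - a) - (1 - a) * (b - x)) / ((b - a) * (1 - x))))
        (Set.Icc a b) := by
      refine continuousOn_const.mul (Real.continuous_arcsin.comp_continuousOn ?_)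
      refine ContinuousOn.div (by fun_prop) (by fun_prop) ?_
      intro x hx
      have hx1 : x < 1 := lt_of_le_of_lt hx.2 hb1
      have : 0 < (b - a) * (1 - x) := by nlinarith
      exact this.ne'
    exact (h1.continuousOn.add h2.continuousOn).sub h3
  have hint : IntervalIntegrable (fun x => Real.sqrt ((b - x) * (x - a)) / (1 - x))
      MeasureTheory.volume a b := by
    apply ContinuousOn.intervalIntegrable
    apply ContinuousOn.div (by fun_prop) (by fun_prop)
    intro x hx
    rw [Set.uIcc_of_le hab.le] at hx
    have hx1 : x < 1 := lt_of_le_of_lt hx.2 hb1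
    intro h; linarith
  rw [intervalIntegral.integral_eq_sub_of_hasDerivAt_of_le hab.le hcont key hint]
  have e1 : (b - b) * (b - a) = 0 := by ring
  have e2 : (b - a) * (a - a) = 0 := by ring
  have e3 : (2 * b - a - b) / (b - a) = 1 := by rw [div_eq_one_iff_eq hba.ne']; ring
  have e4 : (2 * a - a - b) / (b - a) = -1 := by rw [div_eq_iff hba.ne']; ring
  have e5 : ((1 - b) * (b - a) - (1 - a) * (b - b)) / ((b - a) * (1 - b)) = 1 := by
    rw [div_eq_one_iff_eq (mul_pos hba (by linarith : (0:ℝ) < 1 - b)).ne']; ring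
  have e6 : ((1 - b) * (a - a) - (1 - a) * (b - a)) / ((b - a) * (1 - a)) = -1 := by
    rw [div_eq_iff (mul_pos hba (by linarith : (0:ℝ) < 1 - a)).ne']; ring
  rw [e1, e2, e3, e4, e5, e6, Real.sqrt_zero, Real.arcsin_one, Real.arcsin_neg_one]
  ring
set_option maxHeartbeats 1000000 in
set_option maxHeartbeats 1000000 in
/-- For `c ∈ (0,1/2)` and `γ₁ = c/(1+c)`, `γ₂ = 2c/(1+c)`, the mean
of the (atomless) Wachter distribution equals `2c/(1+c)`. -/
theorem stmt8 (c : ℝ) (hc : c ∈ Set.Ioo (0 : ℝ) (1/2))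
    (γ₁ γ₂ : ℝ) (hγ₁ : γ₁ = c / (1 + c)) (hγ₂ : γ₂ = 2 * c / (1 + c))
    (bm bp : ℝ)
    (hbm : bm = (Real.sqrt (γ₁ * (1 - γ₂)) - Real.sqrt (γ₂ * (1 - γ₁))) ^ 2)
    (hbp : bp = (Real.sqrt (γ₁ * (1 - γ₂)) + Real.sqrt (γ₂ * (1 - γ₁))) ^ 2)
    (fW : ℝ → ℝ)
    (hfW : ∀ l, fW l =
      (1 / (2 * Real.pi * γ₁)) * Real.sqrt ((bp - l) * (l - bm)) / (l * (1 - l))) :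
    ∫ l in bm..bp, l * fW l = 2 * c / (1 + c) := by
  obtain ⟨hc0, hc12⟩ := hc
  have h1c : (0:ℝ) < 1 + c := by linarith
  have hγ₁pos : 0 < γ₁ := by rw [hγ₁]; exact div_pos hc0 h1c
  have hγ₂pos : 0 < γ₂ := by rw [hγ₂]; positivity
  have hγ12 : γ₁ < γ₂ := by
    rw [hγ₁, hγ₂, div_lt_div_iff₀ h1c h1c]; nlinarith
  have hsum : γ₁ + γ₂ < 1 := by
    rw [hγ₁, hγ₂, ← add_div, div_lt_one h1c]; linarith
  have hγ₂1 : γ₂ < 1 := by linarith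
  have hγ₁1 : γ₁ < 1 := by linarith
  set u : ℝ := Real.sqrt (γ₁ * (1 - γ₂)) with hu
  set v : ℝ := Real.sqrt (γ₂ * (1 - γ₁)) with hv
  have hu2 : u ^ 2 = γ₁ * (1 - γ₂) := Real.sq_sqrt (by nlinarith)
  have hv2 : v ^ 2 = γ₂ * (1 - γ₁) := Real.sq_sqrt (by nlinarith)
  have hupos : 0 < u := Real.sqrt_pos.mpr (by nlinarith)
  have hvpos : 0 < v := Real.sqrt_pos.mpr (by nlinarith)
  have huv : u < v := Real.sqrt_lt_sqrt (by nlinarith) (by nlinarith)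
  have hbm0 : 0 < bm := by
    rw [hbm]
    have hne : u - v ≠ 0 := by intro h; nlinarith
    exact lt_of_le_of_ne (sq_nonneg _) (Ne.symm (pow_ne_zero 2 hne))
  have hbmbp : bm < bp := by
    rw [hbm, hbp]; nlinarith [mul_pos hupos hvpos]
  have hBpos : (0:ℝ) < 1 - γ₁ - γ₂ + 2 * γ₁ * γ₂ := by nlinarith
  have hdpos : (0:ℝ) < (1 - γ₁ - γ₂) ^ 2 := pow_pos (by linarith) 2
  have h2uv : (2 * u * v) ^ 2 = 4 * (γ₁ * (1 - γ₂)) * (γ₂ * (1 - γ₁)) := by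
    rw [show (2 * u * v) ^ 2 = 4 * u ^ 2 * v ^ 2 from by ring, hu2, hv2]
  have hw2 : (2 * u * v) ^ 2 < (1 - γ₁ - γ₂ + 2 * γ₁ * γ₂) ^ 2 := by
    nlinarith [h2uv, hdpos]
  have huvB : 2 * u * v < 1 - γ₁ - γ₂ + 2 * γ₁ * γ₂ :=
    lt_of_pow_lt_pow_left₀ 2 hBpos.le hw2
  have hbp1 : bp < 1 := by rw [hbp]; nlinarith [hu2, hv2, huvB]
  have hprod : (1 - bm) * (1 - bp) = (1 - γ₁ - γ₂) ^ 2 := by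
    have h : (1 - bm) * (1 - bp) = (1 - u ^ 2 - v ^ 2) ^ 2 - 4 * u ^ 2 * v ^ 2 := by
      rw [hbm, hbp]; ring
    rw [h, hu2, hv2]; ring
  have hsqrt_eq : Real.sqrt ((1 - bm) * (1 - bp)) = 1 - γ₁ - γ₂ := by
    rw [hprod]; exact Real.sqrt_sq (by linarith)
  have hsum_eq : bm + bp = 2 * (γ₁ + γ₂ - 2 * γ₁ * γ₂) := by
    rw [hbm, hbp]; linear_combination 2 * hu2 + 2 * hv2
  have hcongr : Set.EqOn (fun l => l * fW l)
      (fun l => (1 / (2 * Real.pi * γ₁)) * (Real.sqrt ((bp - l) * (l - bm)) / (1 - l)))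
      (Set.uIcc bm bp) := by
    intro l hl
    rw [Set.uIcc_of_le hbmbp.le] at hl
    have hl0 : 0 < l := lt_of_lt_of_le hbm0 hl.1
    have hl1 : l < 1 := lt_of_le_of_lt hl.2 hbp1
    have h1l : (0:ℝ) < 1 - l := by linarith
    simp only [hfW]
    field_simp [hl0.ne', h1l.ne', Real.pi_ne_zero, hγ₁pos.ne']
  rw [intervalIntegral.integral_congr hcongr, intervalIntegral.integral_const_mul,
    key_integral bm bp hbmbp hbp1, hsqrt_eq]
  have hval : 1 - (bm + bp) / 2 - (1 - γ₁ - γ₂) = 2 * γ₁ * γ₂ := by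
    linear_combination -hsum_eq / 2
  rw [hval, ← hγ₂]
  have hπ := Real.pi_ne_zero
  field_simp
end

section
/- The function g(c) = (1+c)/(2c²) · ln(1+c) - (1-c)/(2c²) · ln(1-c) + (1-2c)/(2c²) · ln(1-2c), defined for c ∈ (0, 1/2), satisfies g(c) > 1 for all c ∈ (0, 1/2), and lim_{c→0+} g(c) = 1. -/
open Real Filter

noncomputable def Fa (c : ℝ) : ℝ :=
  (1 + c) * Real.log (1 + c) - (1 - c) * Real.log (1 - c) + (1 - 2 * c) * Real.log (1 - 2 * c)

noncomputable def Fa' (c : ℝ) : ℝ :=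
  Real.log (1 + c) + Real.log (1 - c) - 2 * Real.log (1 - 2 * c)

noncomputable def Fa'' (c : ℝ) : ℝ := 1/(1+c) - 1/(1-c) + 4/(1-2*c)

lemma hFa {c : ℝ} (h1 : -1 < c) (h2 : c < 1/2) : HasDerivAt Fa (Fa' c) c := by
  have h1p : (0:ℝ) < 1 + c := by linarith
  have h1m : (0:ℝ) < 1 - c := by linarith
  have h2m : (0:ℝ) < 1 - 2*c := by linarith
  have ha : HasDerivAt (fun c : ℝ => 1 + c) 1 c := (hasDerivAt_id c).const_add 1
  have hb : HasDerivAt (fun c : ℝ => 1 - c) (-1) c := by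
    simpa using (hasDerivAt_id c).const_sub 1
  have hc2 : HasDerivAt (fun c : ℝ => 1 - 2*c) (-2) c := by
    simpa using ((hasDerivAt_id c).const_mul 2).const_sub 1
  have hla := ha.log h1p.ne'
  have hlb := hb.log h1m.ne'
  have hlc := hc2.log h2m.ne'
  have := ((ha.mul hla).sub (hb.mul hlb)).add (hc2.mul hlc)
  refine this.congr_deriv ?_
  unfold Fa'
  rw [mul_div_cancel₀ _ h1p.ne', mul_div_cancel₀ _ h1m.ne', mul_div_cancel₀ _ h2m.ne']
  ring

lemma hFa' {c : ℝ} (h1 : -1 < c) (h2 : c < 1/2) : HasDerivAt Fa' (Fa'' c) c := by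
  have h1p : (0:ℝ) < 1 + c := by linarith
  have h1m : (0:ℝ) < 1 - c := by linarith
  have h2m : (0:ℝ) < 1 - 2*c := by linarith
  have ha : HasDerivAt (fun c : ℝ => 1 + c) 1 c := (hasDerivAt_id c).const_add 1
  have hb : HasDerivAt (fun c : ℝ => 1 - c) (-1) c := by
    simpa using (hasDerivAt_id c).const_sub 1
  have hc2 : HasDerivAt (fun c : ℝ => 1 - 2*c) (-2) c := by
    simpa using ((hasDerivAt_id c).const_mul 2).const_sub 1
  have hla := ha.log h1p.ne'
  have hlb := hb.log h1m.ne'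
  have hlc := hc2.log h2m.ne'
  have := (hla.add hlb).sub (hlc.const_mul 2)
  refine this.congr_deriv ?_
  unfold Fa''
  field_simp
  ring

lemma Fa''_sub_four_pos {c : ℝ} (h1 : 0 < c) (h2 : c < 1/2) : 0 < Fa'' c - 4 := by
  have h1p : (0:ℝ) < 1 + c := by linarith
  have h1m : (0:ℝ) < 1 - c := by linarith
  have h2m : (0:ℝ) < 1 - 2*c := by linarith
  have key : Fa'' c - 4 = 2*c*(3 + 2*c - 4*c^2) / ((1-2*c)*((1+c)*(1-c))) := by
    rw [eq_div_iff (by positivity)]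
    unfold Fa''
    have e : 4/(1-2*c) * (1-2*c) = 4 := div_mul_cancel₀ _ h2m.ne'
    have e2 : 1/(1+c) * (1+c) = 1 := div_mul_cancel₀ _ h1p.ne'
    have e3 : 1/(1-c) * (1-c) = 1 := div_mul_cancel₀ _ h1m.ne'
    linear_combination ((1+c)*(1-c)) * e + (1-2*c)*(1-c) * e2 - (1-2*c)*(1+c)*e3
  rw [key]
  have hnum : 0 < 3 + 2*c - 4*c^2 := by nlinarith
  positivity

lemma Fa'_pos {c : ℝ} (h1 : 0 < c) (h2 : c < 1/2) : 4 * c < Fa' c := by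
  have hmono : StrictMonoOn (fun c => Fa' c - 4*c) (Set.Ico 0 (1/2 : ℝ)) := by
    apply strictMonoOn_of_deriv_pos (convex_Ico _ _)
    · intro x hx
      exact ((hFa' (by linarith [hx.1]) hx.2).sub
        (by simpa using (hasDerivAt_id x).const_mul 4)).continuousAt.continuousWithinAt
    · intro x hx
      rw [interior_Ico] at hx
      have hd : HasDerivAt (fun c => Fa' c - 4*c) (Fa'' x - 4) x := by
        have := (hFa' (by linarith [hx.1]) hx.2).sub
          (by simpa using (hasDerivAt_id x).const_mul 4 : HasDerivAt (fun c : ℝ => 4*c) 4 x)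
        exact this
      rw [hd.deriv]
      exact Fa''_sub_four_pos hx.1 hx.2
  have h0 : Fa' 0 - 4*0 = 0 := by simp [Fa']
  have := hmono (Set.mem_Ico.mpr ⟨le_refl 0, by norm_num⟩)
    (Set.mem_Ico.mpr ⟨h1.le, h2⟩) h1
  simp only at this
  linarith [this, h0.symm ▸ this]

lemma Fa_gt {c : ℝ} (h1 : 0 < c) (h2 : c < 1/2) : 2 * c^2 < Fa c := by
  have hmono : StrictMonoOn (fun c => Fa c - 2*c^2) (Set.Ico 0 (1/2 : ℝ)) := by
    apply strictMonoOn_of_deriv_pos (convex_Ico _ _)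
    · intro x hx
      exact ((hFa (by linarith [hx.1]) hx.2).sub
        (((hasDerivAt_pow 2 x).const_mul 2))).continuousAt.continuousWithinAt
    · intro x hx
      rw [interior_Ico] at hx
      have hd : HasDerivAt (fun c => Fa c - 2*c^2) (Fa' x - 4*x) x := by
        have := (hFa (by linarith [hx.1]) hx.2).sub ((hasDerivAt_pow 2 x).const_mul 2)
        refine this.congr_deriv ?_
        ring
      rw [hd.deriv]
      linarith [Fa'_pos hx.1 hx.2]
  have := hmono (Set.mem_Ico.mpr ⟨le_refl 0, by norm_num⟩)
    (Set.mem_Ico.mpr ⟨h1.le, h2⟩) h1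
  simp only [Fa] at this
  simp only [Fa]
  norm_num at this ⊢
  linarith

lemma Fa_tendsto : Filter.Tendsto (fun c => Fa c / (2 * c^2)) (nhdsWithin 0 (Set.Ioi 0)) (nhds 1) := by
  have hb : (0:ℝ) < 1/4 := by norm_num
  -- second l'Hopital: Fa' c / (4 c) → 1
  have h2 : Tendsto (fun c => Fa' c / (4 * c)) (nhdsWithin 0 (Set.Ioi 0)) (nhds 1) := by
    have := HasDerivAt.lhopital_zero_right_on_Ioo (a := 0) (b := 1/4)
      (f := Fa') (f' := Fa'') (g := fun c => 4*c) (g' := fun _ => 4) (l := nhds 1) hb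
      (fun x hx => hFa' (by linarith [hx.1]) (by linarith [hx.2]))
      (fun x hx => by simpa using (hasDerivAt_id x).const_mul 4)
      (fun x hx => by norm_num)
      ?_ ?_ ?_
    · exact this
    · have hc : ContinuousAt Fa' 0 := (hFa' (by norm_num) (by norm_num)).continuousAt
      have h0 : Fa' 0 = 0 := by simp [Fa']
      have := hc.tendsto
      rw [h0] at this
      exact this.mono_left nhdsWithin_le_nhds
    · have : Tendsto (fun c : ℝ => 4*c) (nhds 0) (nhds 0) := by
        simpa using (continuous_mul_left (4:ℝ)).tendsto (0:ℝ)
      exact this.mono_left nhdsWithin_le_nhds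
    · have hc : ContinuousAt (fun c => Fa'' c / 4) 0 := by
        have : ContinuousAt Fa'' 0 := by
          unfold Fa''
          fun_prop (disch := norm_num)
        exact this.div_const 4
      have h0 : Fa'' 0 / 4 = 1 := by norm_num [Fa'']
      have := hc.tendsto
      rw [h0] at this
      exact this.mono_left nhdsWithin_le_nhds
  have := HasDerivAt.lhopital_zero_right_on_Ioo (a := 0) (b := 1/4)
    (f := Fa) (f' := Fa') (g := fun c => 2*c^2) (g' := fun c => 4*c) (l := nhds 1) hb
    (fun x hx => hFa (by linarith [hx.1]) (by linarith [hx.2]))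
    (fun x hx => by
      have := (hasDerivAt_pow 2 x).const_mul 2
      refine this.congr_deriv ?_
      ring)
    (fun x hx => (mul_pos (by norm_num : (0:ℝ) < 4) hx.1).ne')
    ?_ ?_ h2
  · exact this
  · have hc : ContinuousAt Fa 0 := (hFa (by norm_num) (by norm_num)).continuousAt
    have h0 : Fa 0 = 0 := by simp [Fa]
    have := hc.tendsto
    rw [h0] at this
    exact this.mono_left nhdsWithin_le_nhds
  · have : Tendsto (fun c : ℝ => 2*c^2) (nhds 0) (nhds 0) := by
      have : Continuous (fun c : ℝ => 2*c^2) := by continuity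
      simpa using this.tendsto (0:ℝ)
    exact this.mono_left nhdsWithin_le_nhds

/-- `g(c) = [(1+c)ln(1+c) - (1-c)ln(1-c) + (1-2c)ln(1-2c)]/(2c²)`
satisfies `g(c) > 1` on `(0,1/2)` and `g(c) → 1` as `c → 0⁺`. -/
theorem stmt11 (g : ℝ → ℝ)
    (hg : ∀ c, g c = ((1 + c) * Real.log (1 + c) - (1 - c) * Real.log (1 - c)
        + (1 - 2 * c) * Real.log (1 - 2 * c)) / (2 * c ^ 2)) :
    (∀ c ∈ Set.Ioo (0 : ℝ) (1/2), 1 < g c) ∧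
    Filter.Tendsto g (nhdsWithin 0 (Set.Ioi 0)) (nhds 1) := by
  have hge : ∀ c, g c = Fa c / (2 * c^2) := fun c => by rw [hg c]; rfl
  constructor
  · intro c hc
    rw [hge c, lt_div_iff₀ (mul_pos two_pos (pow_pos hc.1 2)), one_mul]
    exact Fa_gt hc.1 hc.2
  · exact Fa_tendsto.congr (fun c => (hge c).symm)
end

section
/- As γ → 0+, the rescaled Wachter distribution F_γ(λ) := W(γλ; γ/(1+γ), 2γ/(1+γ)) converges weakly to the distribution F₀ supported on [(1-√2)², (1+√2)²] with density f(λ) = (1/(2π)) √((a₊-λ)(λ-a₋))/λ where a± = (1±√2)². -/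
open Real Filter
open MeasureTheory Set Topology

set_option maxHeartbeats 1000000 in
/-- As `γ → 0⁺`, the rescaled Wachter distribution `F_γ`, with
density `f_γ(λ) = ((1+γ)/(2π)) √((b̂₊-λ)(λ-b̂₋))/(λ(1-γλ))` on
`[b̂₋, b̂₊]` where `b̂± = (√2 ∓ √(1-γ))⁻²`, converges weakly to the
distribution with density `f(λ) = (1/(2π)) √((a₊-λ)(λ-a₋))/λ` on
`[a₋, a₊]`, `a± = (1 ± √2)²`: integrals of every bounded continuous
function converge. -/
theorem stmt13
    (bm bp : ℝ → ℝ)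
    (hbm : ∀ γ, bm γ = (Real.sqrt 2 + Real.sqrt (1 - γ)) ^ (-2 : ℤ))
    (hbp : ∀ γ, bp γ = (Real.sqrt 2 - Real.sqrt (1 - γ)) ^ (-2 : ℤ))
    (fγ : ℝ → ℝ → ℝ)
    (hfγ : ∀ γ l, fγ γ l =
      ((1 + γ) / (2 * Real.pi)) * Real.sqrt ((bp γ - l) * (l - bm γ))
        / (l * (1 - γ * l)))
    (am ap : ℝ)
    (ham : am = (1 - Real.sqrt 2) ^ 2) (hap : ap = (1 + Real.sqrt 2) ^ 2)
    (f : ℝ → ℝ)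
    (hf : ∀ l, f l = (1 / (2 * Real.pi)) * Real.sqrt ((ap - l) * (l - am)) / l) :
    ∀ g : BoundedContinuousFunction ℝ ℝ,
      Filter.Tendsto (fun γ => ∫ l in (bm γ)..(bp γ), g l * fγ γ l)
        (nhdsWithin 0 (Set.Ioi 0))
        (nhds (∫ l in am..ap, g l * f l)) := by
  intro g
  set L := nhdsWithin (0:ℝ) (Set.Ioi 0) with hLdef
  -- numeric facts
  have h2 : Real.sqrt 2 ^ 2 = 2 := Real.sq_sqrt (by norm_num)
  have hs0 : (0:ℝ) ≤ Real.sqrt 2 := Real.sqrt_nonneg 2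
  have hs1 : 1 < Real.sqrt 2 := by nlinarith
  have hs2 : Real.sqrt 2 ≤ 3/2 := by nlinarith
  have hπ : 0 < Real.pi := Real.pi_pos
  have ham' : am = ((Real.sqrt 2 + 1)^2)⁻¹ := by
    rw [ham]
    have h1 : Real.sqrt 2 + 1 ≠ 0 := by positivity
    field_simp
    nlinarith
  have hap' : ap = ((Real.sqrt 2 - 1)^2)⁻¹ := by
    rw [hap]
    have h1 : Real.sqrt 2 - 1 ≠ 0 := by linarith
    field_simp
    nlinarith
  have hampos : 0 < am := by rw [ham']; positivity
  have hap6 : ap ≤ 6 := by rw [hap]; nlinarith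
  have hamap : am < ap := by rw [ham, hap]; nlinarith
  have hap0 : 0 < ap := lt_trans hampos hamap
  have hbm' : ∀ γ, bm γ = ((Real.sqrt 2 + Real.sqrt (1 - γ))^2)⁻¹ := by
    intro γ; rw [hbm, zpow_neg, zpow_two, sq]
  have hbp' : ∀ γ, bp γ = ((Real.sqrt 2 - Real.sqrt (1 - γ))^2)⁻¹ := by
    intro γ; rw [hbp, zpow_neg, zpow_two, sq]
  -- bounds for small positive γ
  have key : ∀ γ : ℝ, 0 < γ → γ ≤ 1/12 →
      am ≤ bm γ ∧ bp γ ≤ ap ∧ bm γ ≤ bp γ := by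
    intro γ hγ hγ'
    have hle : Real.sqrt (1 - γ) ≤ 1 := Real.sqrt_le_one.mpr (by linarith)
    have hpos : 0 < Real.sqrt (1 - γ) := Real.sqrt_pos.mpr (by linarith)
    refine ⟨?_, ?_, ?_⟩
    · rw [ham', hbm']
      exact inv_anti₀ (by positivity) (by nlinarith)
    · rw [hap', hbp']
      exact inv_anti₀ (by nlinarith) (by nlinarith)
    · rw [hbm', hbp']
      exact inv_anti₀ (by nlinarith) (by nlinarith)
  -- limits of endpoints
  have hbm0 : Tendsto bm L (𝓝 am) := by
    have hc : ContinuousAt (fun γ : ℝ => ((Real.sqrt 2 + Real.sqrt (1 - γ))^2)⁻¹) 0 := by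
      apply ContinuousAt.inv₀
      · fun_prop
      · simp only [sub_zero, Real.sqrt_one]
        positivity
    have h3 := hc.tendsto.mono_left (nhdsWithin_le_nhds : L ≤ 𝓝 0)
    simp only [sub_zero, Real.sqrt_one] at h3
    rw [show ((Real.sqrt 2 + 1)^2)⁻¹ = am from ham'.symm] at h3
    exact Tendsto.congr (fun γ => (hbm' γ).symm) h3
  have hbp0 : Tendsto bp L (𝓝 ap) := by
    have hc : ContinuousAt (fun γ : ℝ => ((Real.sqrt 2 - Real.sqrt (1 - γ))^2)⁻¹) 0 := by
      apply ContinuousAt.inv₀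
      · fun_prop
      · simp only [sub_zero, Real.sqrt_one]
        nlinarith
    have h3 := hc.tendsto.mono_left (nhdsWithin_le_nhds : L ≤ 𝓝 0)
    simp only [sub_zero, Real.sqrt_one] at h3
    rw [show ((Real.sqrt 2 - 1)^2)⁻¹ = ap from hap'.symm] at h3
    exact Tendsto.congr (fun γ => (hbp' γ).symm) h3
  -- eventual smallness
  have hev : ∀ᶠ γ in L, 0 < γ ∧ γ ≤ 1/12 := by
    have h1 : ∀ᶠ γ in L, γ ∈ Set.Ioi (0:ℝ) := eventually_mem_nhdsWithin
    have h2' : ∀ᶠ γ in L, γ < 1/12 :=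
      (eventually_lt_nhds (by norm_num : (0:ℝ) < 1/12)).filter_mono nhdsWithin_le_nhds
    filter_upwards [h1, h2'] with γ a b
    exact ⟨a, le_of_lt b⟩
  have hC0 : (0:ℝ) ≤ (ap / Real.pi) / (am / 2) :=
    div_nonneg (div_nonneg hap0.le hπ.le) (by linarith)
  have hRHS : (∫ l in am..ap, g l * f l)
      = ∫ l, (Set.Ioc am ap).indicator (fun l => g l * f l) l := by
    rw [intervalIntegral.integral_of_le hamap.le,
      ← MeasureTheory.integral_indicator measurableSet_Ioc]
  have hcongr : ∀ᶠ γ in L, (∫ l in (bm γ)..(bp γ), g l * fγ γ l)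
      = ∫ l, (Set.Ioc (bm γ) (bp γ)).indicator (fun l => g l * fγ γ l) l := by
    filter_upwards [hev] with γ hγ
    rw [intervalIntegral.integral_of_le (key γ hγ.1 hγ.2).2.2,
      ← MeasureTheory.integral_indicator measurableSet_Ioc]
  rw [hRHS]
  apply Tendsto.congr' (hcongr.mono fun γ hγ => hγ.symm)
  -- dominated convergence
  apply MeasureTheory.tendsto_integral_filter_of_dominated_convergence
    ((Set.Ioc am ap).indicator (fun _ => ‖g‖ * ((ap / Real.pi) / (am / 2))))
  · -- measurability
    apply Eventually.of_forall
    intro γ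
    apply Measurable.aestronglyMeasurable
    apply Measurable.indicator _ measurableSet_Ioc
    apply Measurable.mul (g.continuous.measurable)
    have hfe : fγ γ = fun l =>
        ((1 + γ) / (2 * Real.pi)) * Real.sqrt ((bp γ - l) * (l - bm γ))
          / (l * (1 - γ * l)) := funext (hfγ γ)
    rw [hfe]
    fun_prop
  · -- bound
    filter_upwards [hev] with γ hγ
    apply Eventually.of_forall
    intro l
    by_cases hl : l ∈ Set.Ioc (bm γ) (bp γ)
    · rw [Set.indicator_of_mem hl]
      obtain ⟨k1, k2, k3⟩ := key γ hγ.1 hγ.2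
      have hl' : l ∈ Set.Ioc am ap := ⟨lt_of_le_of_lt k1 hl.1, hl.2.trans k2⟩
      rw [Set.indicator_of_mem hl']
      have hl0 : 0 < l := lt_of_lt_of_le hampos hl'.1.le
      have hlap : l ≤ ap := hl'.2
      have hγl : γ * l ≤ 1/2 := by nlinarith [hγ.1, hγ.2]
      have hden : am / 2 ≤ l * (1 - γ * l) := by nlinarith [hl'.1.le]
      have hsq : Real.sqrt ((bp γ - l) * (l - bm γ)) ≤ ap := by
        have hq : (bp γ - l) * (l - bm γ) ≤ ap^2 := by nlinarith [hl.1.le, hl.2]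
        calc Real.sqrt ((bp γ - l) * (l - bm γ)) ≤ Real.sqrt (ap^2) :=
              Real.sqrt_le_sqrt hq
          _ = ap := Real.sqrt_sq (by linarith)
      have hnum : (1 + γ) / (2 * Real.pi) * Real.sqrt ((bp γ - l) * (l - bm γ))
          ≤ ap / Real.pi := by
        have h1 : (1 + γ) / (2 * Real.pi) ≤ 1 / Real.pi := by
          rw [div_le_div_iff₀ (by positivity) (by positivity)]
          nlinarith [hγ.1, hγ.2]
        calc (1 + γ) / (2 * Real.pi) * Real.sqrt ((bp γ - l) * (l - bm γ))
            ≤ (1 / Real.pi) * ap :=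
              mul_le_mul h1 hsq (Real.sqrt_nonneg _) (by positivity)
          _ = ap / Real.pi := by ring
      have hfb : fγ γ l ≤ (ap / Real.pi) / (am / 2) := by
        rw [hfγ]
        exact div_le_div₀ (by positivity) hnum (by positivity) hden
      have hfnn : 0 ≤ fγ γ l := by
        rw [hfγ]
        apply div_nonneg
        · apply mul_nonneg _ (Real.sqrt_nonneg _)
          apply div_nonneg (by linarith [hγ.1]) (by positivity)
        · nlinarith
      calc ‖g l * fγ γ l‖ = ‖g l‖ * |fγ γ l| := by
            rw [norm_mul, Real.norm_eq_abs, Real.norm_eq_abs]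
        _ ≤ ‖g‖ * ((ap / Real.pi) / (am / 2)) := by
            apply mul_le_mul (g.norm_coe_le_norm l) _ (abs_nonneg _) (norm_nonneg _)
            rw [abs_of_nonneg hfnn]; exact hfb
    · rw [Set.indicator_of_notMem hl]
      simp only [norm_zero]
      apply Set.indicator_nonneg
      intro x _
      exact mul_nonneg (norm_nonneg _) hC0
  · -- integrability of bound
    exact ((integrableOn_const_iff (by finiteness)).mpr (Or.inr measure_Ioc_lt_top)).integrable_indicator
      measurableSet_Ioc
  · -- pointwise convergence a.e.
    have hnull : ∀ᵐ (l:ℝ), l ∉ ({am, ap} : Set ℝ) :=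
      measure_eq_zero_iff_ae_notMem.mp (((Set.finite_singleton ap).insert am).measure_zero _)
    filter_upwards [hnull] with l hl
    simp only [Set.mem_insert_iff, Set.mem_singleton_iff, not_or] at hl
    rcases lt_trichotomy l am with hlt | heq | hgt
    · -- l < am : both zero
      have hH : (Set.Ioc am ap).indicator (fun l => g l * f l) l = 0 := by
        rw [Set.indicator_of_notMem]
        simp only [Set.mem_Ioc, not_and_or]
        exact Or.inl (by linarith)
      rw [hH]
      have hevz : ∀ᶠ γ in L,
          (Set.Ioc (bm γ) (bp γ)).indicator (fun l => g l * fγ γ l) l = 0 := by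
        filter_upwards [hbm0.eventually (eventually_gt_nhds hlt)] with γ hγ
        rw [Set.indicator_of_notMem]
        simp only [Set.mem_Ioc, not_and_or]
        exact Or.inl (by linarith)
      exact Tendsto.congr' (hevz.mono fun γ hγ => hγ.symm) tendsto_const_nhds
    · exact absurd heq hl.1
    · rcases lt_trichotomy l ap with hlt2 | heq2 | hgt2
      · -- interior
        have hH : (Set.Ioc am ap).indicator (fun l => g l * f l) l = g l * f l :=
          Set.indicator_of_mem (show l ∈ Set.Ioc am ap from ⟨hgt, hlt2.le⟩) _
        rw [hH]
        have hl0 : 0 < l := lt_trans hampos hgt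
        have hevm : ∀ᶠ γ in L,
            (Set.Ioc (bm γ) (bp γ)).indicator (fun l => g l * fγ γ l) l
              = g l * fγ γ l := by
          filter_upwards [hbm0.eventually (eventually_lt_nhds hgt),
            hbp0.eventually (eventually_gt_nhds hlt2)] with γ h1 h2'
          exact Set.indicator_of_mem
            (show l ∈ Set.Ioc (bm γ) (bp γ) from ⟨h1, h2'.le⟩) _
        apply Tendsto.congr' (hevm.mono fun γ hγ => hγ.symm)
        apply Tendsto.const_mul
        have T1 : Tendsto (fun γ : ℝ => (1 + γ) / (2 * Real.pi)) L
            (𝓝 ((1 + 0) / (2 * Real.pi))) := by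
          have hc : Continuous fun γ : ℝ => (1 + γ) / (2 * Real.pi) := by fun_prop
          exact (hc.tendsto 0).mono_left (nhdsWithin_le_nhds : L ≤ 𝓝 0)
        have T2 : Tendsto (fun γ => Real.sqrt ((bp γ - l) * (l - bm γ))) L
            (𝓝 (Real.sqrt ((ap - l) * (l - am)))) :=
          ((hbp0.sub tendsto_const_nhds).mul (tendsto_const_nhds.sub hbm0)).sqrt
        have T3 : Tendsto (fun γ : ℝ => l * (1 - γ * l)) L
            (𝓝 (l * (1 - 0 * l))) := by
          have hc : Continuous fun γ : ℝ => l * (1 - γ * l) := by fun_prop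
          exact (hc.tendsto 0).mono_left (nhdsWithin_le_nhds : L ≤ 𝓝 0)
        have hne : l * (1 - 0 * l) ≠ 0 := by
          simp only [zero_mul, sub_zero, mul_one]
          exact hl0.ne'
        have hT := (T1.mul T2).div T3 hne
        have heq : f l = (1 + 0) / (2 * Real.pi)
            * Real.sqrt ((ap - l) * (l - am)) / (l * (1 - 0 * l)) := by
          rw [hf]; norm_num
        rw [heq]
        exact Tendsto.congr (fun γ => (hfγ γ l).symm) hT
      · exact absurd heq2 hl.2
      · -- l > ap : both zero
        have hH : (Set.Ioc am ap).indicator (fun l => g l * f l) l = 0 := by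
          rw [Set.indicator_of_notMem]
          simp only [Set.mem_Ioc, not_and_or]
          exact Or.inr (by linarith)
        rw [hH]
        have hevz : ∀ᶠ γ in L,
            (Set.Ioc (bm γ) (bp γ)).indicator (fun l => g l * fγ γ l) l = 0 := by
          filter_upwards [hbp0.eventually (eventually_lt_nhds hgt2)] with γ hγ
          rw [Set.indicator_of_notMem]
          simp only [Set.mem_Ioc, not_and_or]
          exact Or.inr (by linarith)
        exact Tendsto.congr' (hevz.mono fun γ hγ => hγ.symm) tendsto_const_nhds
end
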